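/- Let f solve f'' + κ f = 0, f(0)=0, f'(0)=1, and suppose ∫₀^λ s κ₊(s) ds ≤ 1 where κ₊ = max{κ,0} and κ₋ = max{-κ,0}. Then there exists μ₀(λ) ∈ (0,1] such that μ₀(λ) ρ ≤ f(ρ) ≤ e^{μ₋(λ)} ρ and μ₀(λ) ≤ f'(ρ) ≤ e^{μ₋(λ)} for all ρ ∈ [0,λ], where μ₋(λ) = ∫₀^λ s κ₋(s) ds. -/

import Mathlib

open Set intervalIntegral MeasureTheory

theorem stmt_5 (κ f : ℝ → ℝ) (hκ : Continuous κ) (hf : ContDiff ℝ 2 f)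
    (hode : ∀ t > (0:ℝ), deriv (deriv f) t + κ t * f t = 0)
    (hf0 : f 0 = 0) (hf'0 : deriv f 0 = 1) (lam : ℝ) (hlam : 0 < lam)
    (hmuP : (∫ s in (0:ℝ)..lam, s * max (κ s) 0) ≤ 1) :
    ∃ μ₀ : ℝ, 0 < μ₀ ∧ μ₀ ≤ 1 ∧
      ∀ ρ ∈ Set.Icc (0:ℝ) lam,
        (μ₀ * ρ ≤ f ρ ∧ f ρ ≤ Real.exp (∫ s in (0:ℝ)..lam, s * max (-κ s) 0) * ρ) ∧
        (μ₀ ≤ deriv f ρ ∧ deriv f ρ ≤ Real.exp (∫ s in (0:ℝ)..lam, s * max (-κ s) 0)) := by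
  -- basic regularity
  have hreg : Differentiable ℝ (deriv f) ∧ Continuous (deriv (deriv f)) := by
    rw [show (2 : WithTop ℕ∞) = 1 + 1 from rfl, contDiff_succ_iff_deriv] at hf
    have h1 := hf.2.2
    rw [contDiff_one_iff_deriv] at h1
    exact ⟨h1.1, h1.2⟩
  have hdf : Differentiable ℝ f := hf.differentiable (by norm_num)
  have hdf' : Differentiable ℝ (deriv f) := hreg.1
  have hf'' : Continuous (deriv (deriv f)) := hreg.2
  have hfc : Continuous f := hdf.continuous
  have hf'c : Continuous (deriv f) := hdf'.continuous
  have hkp : Continuous (fun s => max (κ s) 0) := hκ.max continuous_const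
  have hkm : Continuous (fun s => max (-κ s) 0) := hκ.neg.max continuous_const
  -- ODE holds on [0, ∞)
  have hode0 : ∀ t : ℝ, 0 ≤ t → deriv (deriv f) t = -(κ t * f t) := by
    intro t ht
    rcases eq_or_lt_of_le ht with h | h
    · subst h
      have hg : Continuous (fun t => deriv (deriv f) t + κ t * f t) :=
        hf''.add (hκ.mul hfc)
      have h1 : Filter.Tendsto (fun t => deriv (deriv f) t + κ t * f t)
          (nhdsWithin 0 (Set.Ioi 0)) (nhds (deriv (deriv f) 0 + κ 0 * f 0)) :=
        (hg.continuousAt.continuousWithinAt).tendsto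
      have h2 : Filter.Tendsto (fun t => deriv (deriv f) t + κ t * f t)
          (nhdsWithin 0 (Set.Ioi 0)) (nhds 0) := by
        apply Filter.Tendsto.congr' _ tendsto_const_nhds
        filter_upwards [self_mem_nhdsWithin] with t ht
        exact (hode t ht).symm
      have := tendsto_nhds_unique h1 h2
      linarith
    · have := hode t h; linarith
  -- FTC identity for deriv f
  have keyA : ∀ ρ : ℝ, 0 ≤ ρ → deriv f ρ = 1 - ∫ s in (0:ℝ)..ρ, κ s * f s := by
    intro ρ hρ
    have h1 : (∫ s in (0:ℝ)..ρ, -(κ s * f s)) = deriv f ρ - deriv f 0 := by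
      apply integral_eq_sub_of_hasDerivAt
      · intro x hx
        rw [Set.uIcc_of_le hρ] at hx
        have := hdf'.differentiableAt (x := x) |>.hasDerivAt
        rwa [hode0 x hx.1] at this
      · exact ((hκ.mul hfc).neg).intervalIntegrable _ _
    rw [intervalIntegral.integral_neg] at h1
    rw [hf'0] at h1
    linarith
  -- FTC identity for f - ρ f'
  have keyB : ∀ ρ : ℝ, 0 ≤ ρ →
      f ρ - ρ * deriv f ρ = ∫ s in (0:ℝ)..ρ, s * (κ s * f s) := by
    intro ρ hρ
    have h1 : (∫ s in (0:ℝ)..ρ, s * (κ s * f s))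
        = (f ρ - ρ * deriv f ρ) - (f 0 - 0 * deriv f 0) := by
      apply integral_eq_sub_of_hasDerivAt (f := fun t => f t - t * deriv f t)
      · intro x hx
        rw [Set.uIcc_of_le hρ] at hx
        have h2 : HasDerivAt (fun t => t * deriv f t)
            (1 * deriv f x + x * deriv (deriv f) x) x :=
          (hasDerivAt_id x).mul (hdf'.differentiableAt.hasDerivAt)
        have h3 := (hdf.differentiableAt.hasDerivAt (x := x)).sub h2
        have h4 : deriv f x - (1 * deriv f x + x * deriv (deriv f) x)
            = x * (κ x * f x) := by
          rw [hode0 x hx.1]; ring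
        rwa [h4] at h3
      · exact ((continuous_id.mul (hκ.mul hfc))).intervalIntegrable _ _
    rw [h1, hf0]; ring
  -- positivity of deriv f on [0, lam]
  have hpos : ∀ ρ ∈ Set.Icc (0:ℝ) lam, 0 < deriv f ρ := by
    by_contra hcon
    push_neg at hcon
    obtain ⟨ρ₁, hρ₁, hρ₁le⟩ := hcon
    set T := {ρ : ℝ | ρ ∈ Set.Icc (0:ℝ) lam ∧ deriv f ρ ≤ 0} with hT
    have hTne : T.Nonempty := ⟨ρ₁, hρ₁, hρ₁le⟩
    have hTclosed : IsClosed T := by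
      have : T = Set.Icc (0:ℝ) lam ∩ (deriv f) ⁻¹' (Set.Iic 0) := by
        ext x; simp [hT, Set.mem_Iic]
      rw [this]
      exact isClosed_Icc.inter (isClosed_Iic.preimage hf'c)
    have hTbdd : BddBelow T := ⟨0, fun x hx => hx.1.1⟩
    set ρ₀ := sInf T with hρ₀def
    have hρ₀T : ρ₀ ∈ T := hTclosed.csInf_mem hTne hTbdd
    have hρ₀nn : (0:ℝ) ≤ ρ₀ := hρ₀T.1.1
    have hρ₀lam : ρ₀ ≤ lam := hρ₀T.1.2
    have hρ₀le : deriv f ρ₀ ≤ 0 := hρ₀T.2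
    have hρ₀pos : 0 < ρ₀ := by
      rcases eq_or_lt_of_le hρ₀nn with h | h
      · rw [← h, hf'0] at hρ₀le; linarith
      · exact h
    have hbefore : ∀ s : ℝ, 0 ≤ s → s < ρ₀ → 0 < deriv f s := by
      intro s hs hslt
      by_contra hs'
      push_neg at hs'
      have : s ∈ T := ⟨⟨hs, le_trans hslt.le hρ₀lam⟩, hs'⟩
      have := csInf_le hTbdd this
      linarith
    have hsm : StrictMonoOn f (Set.Icc (0:ℝ) ρ₀) := by
      apply strictMonoOn_of_deriv_pos (convex_Icc _ _) hfc.continuousOn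
      intro x hx
      rw [interior_Icc] at hx
      exact hbefore x hx.1.le hx.2
    have hfnn : ∀ s ∈ Set.Icc (0:ℝ) ρ₀, 0 ≤ f s := by
      intro s hs
      rcases eq_or_lt_of_le hs.1 with h | h
      · rw [← h, hf0]
      · have := hsm (Set.left_mem_Icc.mpr hρ₀nn) hs h
        rw [hf0] at this; linarith
    have hfρ₀pos : 0 < f ρ₀ := by
      have := hsm (Set.left_mem_Icc.mpr hρ₀nn) (Set.right_mem_Icc.mpr hρ₀nn) hρ₀pos
      rw [hf0] at this; linarith
    -- main strict inequality
    have hI : (∫ s in (0:ℝ)..ρ₀, s * (κ s * f s)) < f ρ₀ := by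
      have step1 : (∫ s in (0:ℝ)..ρ₀, s * (κ s * f s))
          ≤ ∫ s in (0:ℝ)..ρ₀, s * (max (κ s) 0 * f s) := by
        apply integral_mono_on hρ₀nn
          ((continuous_id.mul (hκ.mul hfc)).intervalIntegrable _ _)
          ((continuous_id.mul (hkp.mul hfc)).intervalIntegrable _ _)
        intro x hx
        have h1 : κ x * f x ≤ max (κ x) 0 * f x :=
          mul_le_mul_of_nonneg_right (le_max_left _ _) (hfnn x hx)
        exact mul_le_mul_of_nonneg_left h1 hx.1
      by_cases hc : ∃ s ∈ Set.Ioo (0:ℝ) ρ₀, 0 < max (κ s) 0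
      · obtain ⟨s₁, hs₁, hs₁pos⟩ := hc
        have step2 : (∫ s in (0:ℝ)..ρ₀, s * (max (κ s) 0 * f s))
            < ∫ s in (0:ℝ)..ρ₀, s * (max (κ s) 0 * f ρ₀) := by
          apply integral_lt_integral_of_continuousOn_of_le_of_exists_lt hρ₀pos
            (continuous_id.mul (hkp.mul hfc)).continuousOn
            (continuous_id.mul (hkp.mul continuous_const)).continuousOn
          · intro x hx
            have hfx : f x ≤ f ρ₀ := by
              rcases eq_or_lt_of_le hx.2 with h | h
              · rw [h]
              · exact (hsm ⟨hx.1.le, hx.2⟩ (Set.right_mem_Icc.mpr hρ₀nn) h).le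
            have h1 : max (κ x) 0 * f x ≤ max (κ x) 0 * f ρ₀ :=
              mul_le_mul_of_nonneg_left hfx (le_max_right _ _)
            exact mul_le_mul_of_nonneg_left h1 hx.1.le
          · refine ⟨s₁, ⟨hs₁.1.le, hs₁.2.le⟩, ?_⟩
            have hfx : f s₁ < f ρ₀ :=
              hsm ⟨hs₁.1.le, hs₁.2.le⟩ (Set.right_mem_Icc.mpr hρ₀nn) hs₁.2
            have h1 : max (κ s₁) 0 * f s₁ < max (κ s₁) 0 * f ρ₀ :=
              mul_lt_mul_of_pos_left hfx hs₁pos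
            exact mul_lt_mul_of_pos_left h1 hs₁.1
        have step3 : (∫ s in (0:ℝ)..ρ₀, s * (max (κ s) 0 * f ρ₀))
            = (∫ s in (0:ℝ)..ρ₀, s * max (κ s) 0) * f ρ₀ := by
          rw [← intervalIntegral.integral_mul_const]
          congr 1; ext s; ring
        have step4 : (∫ s in (0:ℝ)..ρ₀, s * max (κ s) 0)
            ≤ ∫ s in (0:ℝ)..lam, s * max (κ s) 0 := by
          apply integral_mono_interval le_rfl hρ₀nn hρ₀lam
          · filter_upwards [ae_restrict_mem measurableSet_Ioc] with x hx
            exact mul_nonneg hx.1.le (le_max_right _ _)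
          · exact (continuous_id.mul hkp).intervalIntegrable _ _
        have step5 : (∫ s in (0:ℝ)..ρ₀, s * max (κ s) 0) * f ρ₀ ≤ 1 * f ρ₀ :=
          mul_le_mul_of_nonneg_right (le_trans step4 hmuP) hfρ₀pos.le
        calc (∫ s in (0:ℝ)..ρ₀, s * (κ s * f s))
            ≤ _ := step1
          _ < _ := step2
          _ = _ := step3
          _ ≤ 1 * f ρ₀ := step5
          _ = f ρ₀ := one_mul _
      · push_neg at hc
        have hzero : Set.EqOn (fun s => s * (max (κ s) 0 * f s)) (fun _ => (0:ℝ))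
            (Set.Icc (0:ℝ) ρ₀) := by
          have h1 : Set.EqOn (fun s => s * (max (κ s) 0 * f s)) (fun _ => (0:ℝ))
              (Set.Ioo (0:ℝ) ρ₀) := by
            intro s hs
            have := hc s hs
            have h2 : max (κ s) 0 = 0 := le_antisymm this (le_max_right _ _)
            simp [h2]
          have h2 := h1.closure (continuous_id.mul (hkp.mul hfc)) continuous_const
          rwa [closure_Ioo hρ₀pos.ne] at h2
        have : (∫ s in (0:ℝ)..ρ₀, s * (max (κ s) 0 * f s)) = 0 := by
          rw [intervalIntegral.integral_congr (by rwa [Set.uIcc_of_le hρ₀nn])]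
          simp
        linarith
    have hkeyB := keyB ρ₀ hρ₀nn
    nlinarith [mul_nonpos_of_nonneg_of_nonpos hρ₀nn hρ₀le]
  -- f is strictly monotone, nonnegative on [0, lam]
  have hsm : StrictMonoOn f (Set.Icc (0:ℝ) lam) := by
    apply strictMonoOn_of_deriv_pos (convex_Icc _ _) hfc.continuousOn
    intro x hx
    rw [interior_Icc] at hx
    exact hpos x ⟨hx.1.le, hx.2.le⟩
  have hfnn : ∀ ρ ∈ Set.Icc (0:ℝ) lam, 0 ≤ f ρ := by
    intro ρ hρ
    rcases eq_or_lt_of_le hρ.1 with h | h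
    · rw [← h, hf0]
    · have := hsm (Set.left_mem_Icc.mpr (le_of_lt hlam)) hρ h
      rw [hf0] at this; linarith
  -- upper bound
  set E : ℝ := Real.exp (∫ s in (0:ℝ)..lam, s * max (-κ s) 0) with hE
  have hub : ∀ ρ ∈ Set.Icc (0:ℝ) lam, deriv f ρ ≤ E := by
    rw [hE]
    set B : ℝ → ℝ := fun ρ => 1 + ∫ s in (0:ℝ)..ρ, max (-κ s) 0 * f s with hBdef
    set W : ℝ → ℝ := fun ρ => ∫ s in (0:ℝ)..ρ, s * max (-κ s) 0 with hWdef
    have hkmf : Continuous (fun s => max (-κ s) 0 * f s) := hkm.mul hfc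
    have hskm : Continuous (fun s => s * max (-κ s) 0) := continuous_id.mul hkm
    have hB' : ∀ ρ : ℝ, HasDerivAt B (max (-κ ρ) 0 * f ρ) ρ := fun ρ =>
      (integral_hasDerivAt_right (hkmf.intervalIntegrable _ _)
        (hkmf.stronglyMeasurableAtFilter _ _) hkmf.continuousAt).const_add 1
    have hW' : ∀ ρ : ℝ, HasDerivAt W (ρ * max (-κ ρ) 0) ρ := fun ρ =>
      integral_hasDerivAt_right (hskm.intervalIntegrable _ _)
        (hskm.stronglyMeasurableAtFilter _ _) hskm.continuousAt
    have hBcont : Continuous B := by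
      have : Differentiable ℝ B := fun x => (hB' x).differentiableAt
      exact this.continuous
    have hfB : ∀ ρ ∈ Set.Icc (0:ℝ) lam, deriv f ρ ≤ B ρ := by
      intro ρ hρ
      rw [keyA ρ hρ.1, hBdef]
      have h1 : (∫ s in (0:ℝ)..ρ, -(κ s * f s)) ≤ ∫ s in (0:ℝ)..ρ, max (-κ s) 0 * f s := by
        apply integral_mono_on hρ.1 ((hκ.mul hfc).neg.intervalIntegrable _ _)
          (hkmf.intervalIntegrable _ _)
        intro x hx
        have : -(κ x * f x) = -κ x * f x := by ring
        show -(κ x * f x) ≤ _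
        rw [this]
        exact mul_le_mul_of_nonneg_right (le_max_left _ _)
          (hfnn x ⟨hx.1, hx.2.trans hρ.2⟩)
      rw [intervalIntegral.integral_neg] at h1
      simp only
      linarith
    have hBmono : MonotoneOn B (Set.Icc (0:ℝ) lam) := by
      apply monotoneOn_of_deriv_nonneg (convex_Icc _ _) hBcont.continuousOn
      · intro x hx
        exact (hB' x).differentiableAt.differentiableWithinAt
      · intro x hx
        rw [interior_Icc] at hx
        rw [(hB' x).deriv]
        exact mul_nonneg (le_max_right _ _) (hfnn x ⟨hx.1.le, hx.2.le⟩)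
    have hfle : ∀ ρ ∈ Set.Icc (0:ℝ) lam, f ρ ≤ ρ * B ρ := by
      intro ρ hρ
      have hfρ : f ρ = ∫ s in (0:ℝ)..ρ, deriv f s := by
        rw [integral_deriv_eq_sub (fun x _ => hdf.differentiableAt)
          (hf'c.intervalIntegrable _ _), hf0, sub_zero]
      have h1 : (∫ s in (0:ℝ)..ρ, deriv f s) ≤ ∫ s in (0:ℝ)..ρ, B s := by
        apply integral_mono_on hρ.1 (hf'c.intervalIntegrable _ _)
          (hBcont.intervalIntegrable _ _)
        intro x hx
        exact hfB x ⟨hx.1, hx.2.trans hρ.2⟩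
      have h2 : (∫ s in (0:ℝ)..ρ, B s) ≤ ∫ s in (0:ℝ)..ρ, B ρ := by
        apply integral_mono_on hρ.1 (hBcont.intervalIntegrable _ _)
          intervalIntegrable_const
        intro x hx
        exact hBmono ⟨hx.1, hx.2.trans hρ.2⟩ hρ hx.2
      rw [intervalIntegral.integral_const, smul_eq_mul, sub_zero] at h2
      rw [hfρ]
      linarith
    set G : ℝ → ℝ := fun ρ => B ρ * Real.exp (-(W ρ)) with hGdef
    have hG' : ∀ ρ : ℝ, HasDerivAt G
        (max (-κ ρ) 0 * f ρ * Real.exp (-(W ρ))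
          + B ρ * (Real.exp (-(W ρ)) * -(ρ * max (-κ ρ) 0))) ρ := fun ρ =>
      (hB' ρ).mul ((hW' ρ).neg.exp)
    have hGanti : AntitoneOn G (Set.Icc (0:ℝ) lam) := by
      apply antitoneOn_of_deriv_nonpos (convex_Icc _ _)
      · exact (Differentiable.continuous (fun x => (hG' x).differentiableAt)).continuousOn
      · intro x hx
        exact (hG' x).differentiableAt.differentiableWithinAt
      · intro x hx
        rw [interior_Icc] at hx
        rw [(hG' x).deriv]
        have h1 : f x ≤ x * B x := hfle x ⟨hx.1.le, hx.2.le⟩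
        have h2 : (0:ℝ) ≤ max (-κ x) 0 := le_max_right _ _
        have h3 : (0:ℝ) < Real.exp (-(W x)) := Real.exp_pos _
        have heq : max (-κ x) 0 * f x * Real.exp (-(W x))
            + B x * (Real.exp (-(W x)) * -(x * max (-κ x) 0))
            = Real.exp (-(W x)) * (max (-κ x) 0 * (f x - x * B x)) := by ring
        rw [heq]
        exact mul_nonpos_of_nonneg_of_nonpos h3.le
          (mul_nonpos_of_nonneg_of_nonpos h2 (by linarith))
    intro ρ hρ
    have hGρ : G ρ ≤ G 0 :=
      hGanti (Set.left_mem_Icc.mpr hlam.le) hρ hρ.1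
    have hG0 : G 0 = 1 := by
      simp [hGdef, hBdef, hWdef]
    rw [hG0] at hGρ
    have hBρ : B ρ ≤ Real.exp (W ρ) := by
      have key : Real.exp (W ρ) * Real.exp (-(W ρ)) = 1 := by
        rw [← Real.exp_add]; simp
      have h3 : (0:ℝ) < Real.exp (-(W ρ)) := Real.exp_pos _
      have h4 : (0:ℝ) < Real.exp (W ρ) := Real.exp_pos _
      have hGρ' : B ρ * Real.exp (-(W ρ)) ≤ 1 := hGρ
      nlinarith [mul_le_mul_of_nonneg_left hGρ' h4.le]
    have hWmono : W ρ ≤ W lam := by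
      apply integral_mono_interval le_rfl hρ.1 hρ.2
      · filter_upwards [ae_restrict_mem measurableSet_Ioc] with x hx
        exact mul_nonneg hx.1.le (le_max_right _ _)
      · exact hskm.intervalIntegrable _ _
    calc deriv f ρ ≤ B ρ := hfB ρ hρ
      _ ≤ Real.exp (W ρ) := hBρ
      _ ≤ Real.exp (W lam) := Real.exp_le_exp.mpr hWmono
  -- min of deriv f on [0,lam]
  obtain ⟨x₀, hx₀, hminOn⟩ := isCompact_Icc.exists_isMinOn
    (Set.nonempty_Icc.mpr (le_of_lt hlam)) hf'c.continuousOn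
  have hmin : ∀ ρ ∈ Set.Icc (0:ℝ) lam, deriv f x₀ ≤ deriv f ρ := fun ρ hρ => hminOn hρ
  refine ⟨min (deriv f x₀) 1, lt_min (hpos x₀ hx₀) one_pos, min_le_right _ _, ?_⟩
  intro ρ hρ
  have hμρ : min (deriv f x₀) 1 ≤ deriv f ρ := le_trans (min_le_left _ _) (hmin ρ hρ)
  have hfρ : f ρ = ∫ s in (0:ℝ)..ρ, deriv f s := by
    rw [integral_deriv_eq_sub (fun x _ => hdf.differentiableAt) (hf'c.intervalIntegrable _ _),
      hf0, sub_zero]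
  constructor
  · constructor
    · -- μ₀ * ρ ≤ f ρ
      rw [hfρ]
      have : (∫ s in (0:ℝ)..ρ, min (deriv f x₀) 1) ≤ ∫ s in (0:ℝ)..ρ, deriv f s := by
        apply integral_mono_on hρ.1 (intervalIntegrable_const) (hf'c.intervalIntegrable _ _)
        intro x hx
        exact le_trans (min_le_left _ _) (hmin x ⟨hx.1, le_trans hx.2 hρ.2⟩)
      rw [intervalIntegral.integral_const, smul_eq_mul, sub_zero] at this
      linarith [this]
    · -- f ρ ≤ E * ρ
      rw [hfρ]
      have : (∫ s in (0:ℝ)..ρ, deriv f s) ≤ ∫ s in (0:ℝ)..ρ, E := by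
        apply integral_mono_on hρ.1 (hf'c.intervalIntegrable _ _) intervalIntegrable_const
        intro x hx
        exact hub x ⟨hx.1, le_trans hx.2 hρ.2⟩
      rw [intervalIntegral.integral_const, smul_eq_mul, sub_zero] at this
      linarith [this]
  · exact ⟨hμρ, hub ρ hρ⟩
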